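/- Theorem 4.1(ii1): Suppose B ≠ 1 and the critical voltages satisfy V_q^1 > 0 > V_q^2, where V_q^1 = −D/(z2·(1−B)) and V_q^2 = −D/(z1·(1−B)). If V_q^2 < V < V_q^1, and moreover z1·V + D ≠ 0 and z2·V + D ≠ 0, then J10·J11 < 0 and J20·J21 > 0. -/

import Mathlib

set_option maxHeartbeats 1000000


theorem stmt15 (z1 z2 V L R H1 α β : ℝ)
    (hz1 : 0 < z1) (hz2 : z2 < 0) (hL : 0 < L) (hR : 0 < R) (hLR : L ≠ R)
    (hH1 : 0 < H1) (hα : 0 < α) (hαβ : α < β) (hβ : β < 1)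
    (D Sa Sb A B J10 J20 J11 J21 Vq1 Vq2 : ℝ)
    (hD : D = Real.log L - Real.log R)
    (hSa : Sa = (1 - α) * L + α * R)
    (hSb : Sb = (1 - β) * L + β * R)
    (hJ10 : J10 = (L - R) * (z1 * V + D) / (z1 * H1 * D))
    (hJ20 : J20 = -((L - R) * (z2 * V + D)) / (z2 * H1 * D))
    (hA : A = -((β - α) * (L - R) ^ 2) / (Sa * Sb * D))
    (hB : B = Real.log (Sb / Sa) / A)
    (hJ11 : J11 = A * (z2 * (1 - B) * V + D) * (z1 * V + D) / ((z1 - z2) * H1 * D ^ 2))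
    (hJ21 : J21 = A * (z1 * (1 - B) * V + D) * (z2 * V + D) / ((z2 - z1) * H1 * D ^ 2))
    (hB1 : B ≠ 1)
    (hV1 : Vq1 = -D / (z2 * (1 - B)))
    (hV2 : Vq2 = -D / (z1 * (1 - B)))
    (horder : Vq2 < 0 ∧ 0 < Vq1)
    (hrange : Vq2 < V ∧ V < Vq1)
    (hne1 : z1 * V + D ≠ 0) (hne2 : z2 * V + D ≠ 0) :
    J10 * J11 < 0 ∧ 0 < J20 * J21 := by
  have hLRD : 0 < (L - R) * D := by
    rcases hLR.lt_or_gt with h | h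
    · have hlog : Real.log L < Real.log R := Real.log_lt_log hL h
      nlinarith [hlog, hD]
    · have hlog : Real.log R < Real.log L := Real.log_lt_log hR h
      nlinarith [hlog, hD]
  have hd0 : D ≠ 0 := by
    intro h; rw [h] at hLRD; simp at hLRD
  have hSa0 : 0 < Sa := by rw [hSa]; nlinarith
  have hSb0 : 0 < Sb := by rw [hSb]; nlinarith
  have hLR2 : 0 < (L - R) ^ 2 := by
    rcases hLR.lt_or_gt with h | h <;> nlinarith
  have hden : Sa * Sb * D ≠ 0 := mul_ne_zero (mul_ne_zero hSa0.ne' hSb0.ne') hd0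
  have hAeq : A * (Sa * Sb * D) = -((β - α) * (L - R) ^ 2) := by
    rw [hA, div_mul_cancel₀ _ hden]
  have hAD : A * D < 0 := by
    nlinarith [mul_pos hSa0 hSb0, hLR2, hAeq]
  have hB1' : (1 : ℝ) - B ≠ 0 := sub_ne_zero.mpr (fun h => hB1 h.symm)
  have hc : z2 * (1 - B) ≠ 0 := mul_ne_zero hz2.ne hB1'
  have hc' : z1 * (1 - B) ≠ 0 := mul_ne_zero hz1.ne' hB1'
  have hcV1 : z2 * (1 - B) * Vq1 = -D := by
    rw [hV1]; field_simp [hz2.ne]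
  have hcV2 : z1 * (1 - B) * Vq2 = -D := by
    rw [hV2]; field_simp
  have hDval1 : D = -(z2 * (1 - B)) * Vq1 := by linarith [hcV1]
  have hDval2 : D = -(z1 * (1 - B)) * Vq2 := by linarith [hcV2]
  have hc2 : 0 < (z2 * (1 - B)) ^ 2 := by positivity
  have hc'2 : 0 < (z1 * (1 - B)) ^ 2 := by positivity
  have h1 : 0 < (z2 * (1 - B) * V + D) * D := by
    rw [hDval1]
    nlinarith [mul_pos (mul_pos hc2 horder.2) (sub_pos.mpr hrange.2)]
  have h2 : 0 < (z1 * (1 - B) * V + D) * D := by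
    rw [hDval2]
    nlinarith [mul_pos (mul_pos hc'2 (neg_pos.mpr horder.1)) (sub_pos.mpr
      (show Vq2 < V from hrange.1))]
  have hsq1 : 0 < (z1 * V + D) ^ 2 := by positivity
  have hsq2 : 0 < (z2 * V + D) ^ 2 := by positivity
  have hD2 : 0 < D ^ 2 := by positivity
  have hD6 : 0 < D ^ 6 := by nlinarith [pow_pos hD2 3]
  have hz12 : z1 - z2 ≠ 0 := ne_of_gt (by linarith)
  have hz21 : z2 - z1 ≠ 0 := ne_of_lt (by linarith)
  constructor
  · have hm : 0 < z1 * (z1 - z2) * H1 ^ 2 * D ^ 6 := by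
      exact mul_pos (mul_pos (mul_pos hz1 (by linarith)) (pow_pos hH1 2)) hD6
    have key1 : J10 * J11 * (z1 * (z1 - z2) * H1 ^ 2 * D ^ 6) =
        ((L - R) * D) * (A * D) * ((z2 * (1 - B) * V + D) * D) * ((z1 * V + D) ^ 2) := by
      have hne : (z1 * H1 * D) * ((z1 - z2) * H1 * D ^ 2) ≠ 0 :=
        mul_ne_zero (mul_ne_zero (mul_ne_zero hz1.ne' hH1.ne') hd0)
          (mul_ne_zero (mul_ne_zero hz12 hH1.ne') (pow_ne_zero 2 hd0))
      rw [hJ10, hJ11, div_mul_div_comm, div_mul_eq_mul_div, div_eq_iff hne]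
      ring
    have hRHS : ((L - R) * D) * (A * D) * ((z2 * (1 - B) * V + D) * D) * ((z1 * V + D) ^ 2) < 0 := by
      linarith [mul_neg_of_neg_of_pos hAD (mul_pos (mul_pos hLRD h1) hsq1)]
    have h := (eq_div_iff hm.ne').mpr key1
    rw [h]
    exact div_neg_of_neg_of_pos hRHS hm
  · have hm : 0 < z2 * (z2 - z1) * H1 ^ 2 * D ^ 6 := by
      exact mul_pos (mul_pos (mul_pos_of_neg_of_neg hz2 (by linarith)) (pow_pos hH1 2)) hD6
    have key2 : J20 * J21 * (z2 * (z2 - z1) * H1 ^ 2 * D ^ 6) =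
        -(((L - R) * D) * (A * D) * ((z1 * (1 - B) * V + D) * D) * ((z2 * V + D) ^ 2)) := by
      have hne : (z2 * H1 * D) * ((z2 - z1) * H1 * D ^ 2) ≠ 0 :=
        mul_ne_zero (mul_ne_zero (mul_ne_zero hz2.ne hH1.ne') hd0)
          (mul_ne_zero (mul_ne_zero hz21 hH1.ne') (pow_ne_zero 2 hd0))
      rw [hJ20, hJ21, div_mul_div_comm, div_mul_eq_mul_div, div_eq_iff hne]
      ring
    have hRHS : 0 < -(((L - R) * D) * (A * D) * ((z1 * (1 - B) * V + D) * D) * ((z2 * V + D) ^ 2)) := by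
      linarith [mul_neg_of_neg_of_pos hAD (mul_pos (mul_pos hLRD h2) hsq2)]
    have h := (eq_div_iff hm.ne').mpr key2
    rw [h]
    exact div_pos hRHS hm
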